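/- Let X_1, X_2, ... be i.i.d. random variables taking value +1 with probability p ∈ (1/2, 1) and -1 with probability 1-p, and let S_n = X_1 + ... + X_n. Then lim_{n→∞} -(1/n) log P[S_n ≤ 0] = D_KL(1/2 || p). -/

import Mathlib

open MeasureTheory ProbabilityTheory Filter

/-- Bernoulli Kullback-Leibler divergence `D_KL(x || p)`. -/
noncomputable def klBer (x p : ℝ) : ℝ :=
  x * Real.log (x / p) + (1 - x) * Real.log ((1 - x) / (1 - p))

private lemma auxTendsto (p : ℝ) (hp : 1/2 < p) (hp1 : p < 1) (P : ℕ → ℝ)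
    (M : ℕ → ℝ) (hM : ∀ n, M n = p ^ (n/2) * (1-p) ^ (n - n/2))
    (hl : ∀ n : ℕ, (2:ℝ)^n / ((n:ℝ)+1) * M n ≤ P n) (hu : ∀ n : ℕ, P n ≤ (2:ℝ)^n * M n) :
    Tendsto (fun n : ℕ => -(1/(n:ℝ)) * Real.log (P n)) atTop (nhds (klBer (1/2) p)) := by
  have hp0 : (0:ℝ) < p := by linarith
  have hq0 : (0:ℝ) < 1 - p := by linarith
  have hM0 : ∀ n, 0 < M n := fun n => by rw [hM]; positivity
  have hP0 : ∀ n, 0 < P n := fun n =>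
    lt_of_lt_of_le (mul_pos (by positivity) (hM0 n)) (hl n)
  have hkl : klBer (1/2) p = -(Real.log 2 + (1/2) * Real.log p + (1/2) * Real.log (1-p)) := by
    have h12 : (1:ℝ) - 1/2 = 1/2 := by norm_num
    rw [klBer, h12, Real.log_div (by norm_num) hp0.ne', Real.log_div (by norm_num) hq0.ne',
      show Real.log (1/2 : ℝ) = -Real.log 2 by rw [one_div, Real.log_inv]]
    ring
  set a : ℕ → ℝ := fun n => ((n/2 : ℕ) : ℝ) / n with ha
  set b : ℕ → ℝ := fun n => ((n - n/2 : ℕ) : ℝ) / n with hb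
  set c : ℕ → ℝ := fun n => Real.log ((n:ℝ)+1) / n with hc
  set g : ℕ → ℝ := fun n => -(Real.log 2 + a n * Real.log p + b n * Real.log (1-p)) with hg
  have h1n : Tendsto (fun n : ℕ => 1/(n:ℝ)) atTop (nhds 0) := tendsto_one_div_atTop_nhds_zero_nat
  have hhalf : Tendsto (fun _ : ℕ => (1/2:ℝ)) atTop (nhds (1/2)) := tendsto_const_nhds
  have hone : Tendsto (fun _ : ℕ => (1:ℝ)) atTop (nhds 1) := tendsto_const_nhds
  -- limit of a
  have hta : Tendsto a atTop (nhds (1/2)) := by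
    have hlo : Tendsto (fun n : ℕ => 1/2 - (1/2) * (1/(n:ℝ))) atTop (nhds (1/2)) := by
      have := hhalf.sub (h1n.const_mul (1/2))
      simpa using this
    refine tendsto_of_tendsto_of_tendsto_of_le_of_le' hlo hhalf ?_ ?_
    · filter_upwards [eventually_ge_atTop 1] with n hn
      have hn0 : (0:ℝ) < n := by exact_mod_cast hn
      have key : (n:ℝ) - 1 ≤ 2 * ((n/2 : ℕ):ℝ) := by
        have h : n ≤ 2 * (n/2) + 1 := by omega
        have h2 : (n:ℝ) ≤ ((2*(n/2)+1 : ℕ):ℝ) := by exact_mod_cast h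
        push_cast at h2; linarith
      simp only [ha]
      rw [le_div_iff₀ hn0]
      have h3 : (1/(n:ℝ)) * n = 1 := by field_simp
      nlinarith
    · filter_upwards [eventually_ge_atTop 1] with n hn
      have hn0 : (0:ℝ) < n := by exact_mod_cast hn
      have key : 2 * ((n/2:ℕ):ℝ) ≤ n := by
        have h : 2 * (n/2) ≤ n := by omega
        have h2 : ((2*(n/2) : ℕ):ℝ) ≤ (n:ℝ) := by exact_mod_cast h
        push_cast at h2; linarith
      simp only [ha]
      rw [div_le_iff₀ hn0]
      linarith
  -- limit of b
  have htb : Tendsto b atTop (nhds (1/2)) := by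
    have heq : ∀ᶠ n : ℕ in atTop, 1 - a n = b n := by
      filter_upwards [eventually_ge_atTop 1] with n hn
      have hn0 : (0:ℝ) < n := by exact_mod_cast hn
      simp only [ha, hb]
      rw [Nat.cast_sub (Nat.div_le_self n 2)]
      field_simp
    have := hone.sub hta
    rw [show (1:ℝ) - 1/2 = 1/2 by norm_num] at this
    exact Tendsto.congr' heq this
  -- limit of c
  have htc : Tendsto c atTop (nhds 0) := by
    have hlog : Tendsto (fun x : ℝ => Real.log x / x) atTop (nhds 0) :=
      Real.isLittleO_log_id_atTop.tendsto_div_nhds_zero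
    have hcomp : Tendsto (fun n : ℕ => Real.log ((n:ℝ)+1) / ((n:ℝ)+1)) atTop (nhds 0) :=
      hlog.comp (tendsto_atTop_add_const_right atTop 1 tendsto_natCast_atTop_atTop)
    have hrat : Tendsto (fun n : ℕ => ((n:ℝ)+1)/n) atTop (nhds 1) := by
      have heq : ∀ᶠ n : ℕ in atTop, 1 + 1/(n:ℝ) = ((n:ℝ)+1)/n := by
        filter_upwards [eventually_ge_atTop 1] with n hn
        have hn0 : (0:ℝ) < n := by exact_mod_cast hn
        field_simp
      have := hone.add h1n
      rw [show (1:ℝ) + 0 = 1 by norm_num] at this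
      exact Tendsto.congr' heq this
    have := hcomp.mul hrat
    rw [mul_one] at this
    refine Tendsto.congr' ?_ this
    filter_upwards [eventually_ge_atTop 1] with n hn
    have hn0 : (0:ℝ) < n := by exact_mod_cast hn
    simp only [hc]
    field_simp
  -- limit of g and g + c
  have htg : Tendsto g atTop (nhds (klBer (1/2) p)) := by
    rw [hkl]
    exact ((tendsto_const_nhds.add (hta.mul_const _)).add (htb.mul_const _)).neg
  have htgc : Tendsto (fun n => g n + c n) atTop (nhds (klBer (1/2) p)) := by
    have := htg.add htc
    rwa [add_zero] at this
  -- squeeze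
  have hlogexp : ∀ n : ℕ, Real.log ((2:ℝ)^n * M n) =
      n * Real.log 2 + ((n/2 : ℕ):ℝ) * Real.log p + ((n - n/2 : ℕ):ℝ) * Real.log (1-p) := by
    intro n
    rw [hM, Real.log_mul (by positivity) (by positivity),
      Real.log_mul (by positivity) (by positivity), Real.log_pow, Real.log_pow, Real.log_pow]
    push_cast; ring
  refine tendsto_of_tendsto_of_tendsto_of_le_of_le' htg htgc ?_ ?_
  · filter_upwards [eventually_ge_atTop 1] with n hn
    have hn0 : (0:ℝ) < n := by exact_mod_cast hn
    have hZ : (n:ℝ) * (Real.log 2 + a n * Real.log p + b n * Real.log (1-p)) =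
        n * Real.log 2 + ((n/2 : ℕ):ℝ) * Real.log p + ((n - n/2 : ℕ):ℝ) * Real.log (1-p) := by
      simp only [ha, hb]; field_simp
    have hkey : Real.log (P n) ≤
        (n:ℝ) * (Real.log 2 + a n * Real.log p + b n * Real.log (1-p)) := by
      rw [hZ, ← hlogexp n]
      exact Real.log_le_log (hP0 n) (hu n)
    have hmul := mul_le_mul_of_nonneg_left hkey (by positivity : (0:ℝ) ≤ 1/(n:ℝ))
    have he1 : (1/(n:ℝ)) * ((n:ℝ) * (Real.log 2 + a n * Real.log p + b n * Real.log (1-p))) =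
        Real.log 2 + a n * Real.log p + b n * Real.log (1-p) := by
      field_simp
    rw [he1] at hmul
    simp only [hg, neg_mul]
    linarith
  · filter_upwards [eventually_ge_atTop 1] with n hn
    have hn0 : (0:ℝ) < n := by exact_mod_cast hn
    have hZ : (n:ℝ) * (Real.log 2 + a n * Real.log p + b n * Real.log (1-p)) =
        n * Real.log 2 + ((n/2 : ℕ):ℝ) * Real.log p + ((n - n/2 : ℕ):ℝ) * Real.log (1-p) := by
      simp only [ha, hb]; field_simp
    have hkey : (n:ℝ) * (Real.log 2 + a n * Real.log p + b n * Real.log (1-p))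
        - Real.log ((n:ℝ)+1) ≤ Real.log (P n) := by
      have hlow : Real.log ((2:ℝ)^n / ((n:ℝ)+1) * M n) ≤ Real.log (P n) :=
        Real.log_le_log (mul_pos (by positivity) (hM0 n)) (hl n)
      have heq : Real.log ((2:ℝ)^n / ((n:ℝ)+1) * M n) =
          Real.log ((2:ℝ)^n * M n) - Real.log ((n:ℝ)+1) := by
        rw [div_mul_eq_mul_div,
          Real.log_div (mul_pos (by positivity) (hM0 n)).ne' (by positivity)]
      rw [heq, hlogexp n, ← hZ] at hlow
      exact hlow
    have hmul := mul_le_mul_of_nonneg_left hkey (by positivity : (0:ℝ) ≤ 1/(n:ℝ))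
    have he1 : (1/(n:ℝ)) * ((n:ℝ) * (Real.log 2 + a n * Real.log p + b n * Real.log (1-p))
        - Real.log ((n:ℝ)+1)) =
        Real.log 2 + a n * Real.log p + b n * Real.log (1-p) - c n := by
      simp only [hc]; field_simp
    rw [he1] at hmul
    simp only [hg, neg_mul]
    linarith

theorem stmt6 {Ω : Type*} [MeasurableSpace Ω] (μ : Measure Ω) [IsProbabilityMeasure μ]
    (p : ℝ) (hp : 1/2 < p) (hp1 : p < 1)
    (X : ℕ → Ω → ℤ) (hmeas : ∀ i, Measurable (X i))
    (hindep : iIndepFun X μ)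
    (hval : ∀ i ω, X i ω = 1 ∨ X i ω = -1)
    (hdist : ∀ i, μ {ω | X i ω = 1} = ENNReal.ofReal p) :
    Tendsto (fun n : ℕ =>
        -(1/(n:ℝ)) * Real.log ((μ {ω | ∑ k ∈ Finset.range n, X k ω ≤ 0}).toReal))
      atTop (nhds (klBer (1/2) p)) := by
  have hp0 : (0:ℝ) < p := by linarith
  have hq0 : (0:ℝ) < 1 - p := by linarith
  -- measure of X i = -1
  have hneg : ∀ i, μ (X i ⁻¹' {(-1:ℤ)}) = ENNReal.ofReal (1 - p) := by
    intro i
    have hc : X i ⁻¹' {(-1:ℤ)} = (X i ⁻¹' {(1:ℤ)})ᶜ := by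
      ext ω
      simp only [Set.mem_preimage, Set.mem_singleton_iff, Set.mem_compl_iff]
      rcases hval i ω with h | h <;> simp [h]
    have hm : MeasurableSet (X i ⁻¹' {(1:ℤ)}) := (hmeas i) (measurableSet_singleton _)
    rw [hc, measure_compl hm (measure_ne_top μ _)]
    have h1 : μ (X i ⁻¹' {(1:ℤ)}) = ENNReal.ofReal p := hdist i
    rw [h1, measure_univ, ← ENNReal.ofReal_one, ← ENNReal.ofReal_sub _ hp0.le]
  -- atoms
  set C : Finset ℕ → ℕ → Set Ω := fun A n =>
    ⋂ i ∈ Finset.range n, X i ⁻¹' {(if i ∈ A then (1:ℤ) else -1)} with hC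
  have hCmeas : ∀ A n, MeasurableSet (C A n) := by
    intro A n
    exact MeasurableSet.biInter (Finset.range n).countable_toSet
      (fun i _ => (hmeas i) (measurableSet_singleton _))
  have hatom : ∀ (n : ℕ) (A : Finset ℕ), A ⊆ Finset.range n →
      μ (C A n) = ENNReal.ofReal p ^ A.card * ENNReal.ofReal (1 - p) ^ (n - A.card) := by
    intro n A hA
    have := hindep.measure_inter_preimage_eq_mul (Finset.range n)
      (sets := fun i => {(if i ∈ A then (1:ℤ) else -1)})
      (fun i _ => measurableSet_singleton _)
    rw [hC]; rw [this]
    have hterm : ∀ i, μ (X i ⁻¹' {(if i ∈ A then (1:ℤ) else -1)}) =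
        if i ∈ A then ENNReal.ofReal p else ENNReal.ofReal (1 - p) := by
      intro i
      by_cases h : i ∈ A <;> simp only [h, if_true, if_false]
      · exact hdist i
      · exact hneg i
    rw [Finset.prod_congr rfl (fun i _ => hterm i), Finset.prod_ite, Finset.prod_const,
      Finset.prod_const]
    congr 1
    · congr 1
      rw [Finset.filter_mem_eq_inter, Finset.inter_eq_right.mpr hA]
    · congr 1
      have : Finset.filter (fun i => i ∉ A) (Finset.range n) = Finset.range n \ A := by
        ext i; simp [Finset.mem_sdiff]
      rw [this, Finset.card_sdiff_of_subset hA, Finset.card_range]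
  -- sum formula
  have hsum : ∀ (n : ℕ) (ω : Ω), ∑ k ∈ Finset.range n, X k ω =
      2 * ((Finset.range n).filter (fun i => X i ω = 1)).card - n := by
    intro n ω
    set A := (Finset.range n).filter (fun i => X i ω = 1) with hA
    have h1 : ∑ k ∈ Finset.range n, X k ω =
        (∑ k ∈ A, X k ω) + ∑ k ∈ (Finset.range n).filter (fun i => ¬ X i ω = 1), X k ω := by
      rw [hA, Finset.sum_filter_add_sum_filter_not]
    have h2 : ∑ k ∈ A, X k ω = A.card := by
      rw [Finset.sum_congr rfl (fun i hi => (Finset.mem_filter.mp hi).2), Finset.sum_const,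
        nsmul_eq_mul, mul_one]
    have h3 : ∑ k ∈ (Finset.range n).filter (fun i => ¬ X i ω = 1), X k ω =
        -(((Finset.range n).filter (fun i => ¬ X i ω = 1)).card : ℤ) := by
      have : ∀ i ∈ (Finset.range n).filter (fun i => ¬ X i ω = 1), X i ω = -1 := by
        intro i hi
        rcases hval i ω with h | h
        · exact absurd h (Finset.mem_filter.mp hi).2
        · exact h
      rw [Finset.sum_congr rfl this, Finset.sum_const, nsmul_eq_mul]; ring
    have h4 : ((Finset.range n).filter (fun i => ¬ X i ω = 1)).card = n - A.card := by
      rw [hA, Finset.filter_not, Finset.card_sdiff_of_subset (Finset.filter_subset _ _), Finset.card_range]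
    have h5 : A.card ≤ n := by
      rw [hA]; exact le_trans (Finset.card_filter_le _ _) (Finset.card_range n).le
    rw [h1, h2, h3, h4]
    push_cast [Nat.cast_sub h5]
    ring
  -- membership characterization
  have hmemC : ∀ (n : ℕ) (A : Finset ℕ) (ω : Ω),
      ω ∈ C A n ↔ ∀ i ∈ Finset.range n, X i ω = (if i ∈ A then (1:ℤ) else -1) := by
    intro n A ω
    simp [hC]
  have hfilter : ∀ (n : ℕ) (A : Finset ℕ) (ω : Ω), A ⊆ Finset.range n → ω ∈ C A n →
      (Finset.range n).filter (fun i => X i ω = 1) = A := by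
    intro n A ω hA hω
    ext i
    simp only [Finset.mem_filter]
    constructor
    · rintro ⟨hi, hXi⟩
      have := (hmemC n A ω).mp hω i hi
      by_contra h
      rw [if_neg h] at this
      omega
    · intro hiA
      refine ⟨hA hiA, ?_⟩
      have := (hmemC n A ω).mp hω i (hA hiA)
      rwa [if_pos hiA] at this
  -- disjointness
  have hdisj : ∀ (n : ℕ), Set.PairwiseDisjoint
      ↑((Finset.range n).powersetCard (n/2)) (fun A => C A n) := by
    intro n A hA B hB hAB
    rw [Finset.mem_coe, Finset.mem_powersetCard] at hA hB
    obtain ⟨hA1, _⟩ := hA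
    obtain ⟨hB1, _⟩ := hB
    refine Set.disjoint_left.mpr fun ω hωA hωB => ?_
    exact hAB (by rw [← hfilter n A ω hA1 hωA, hfilter n B ω hB1 hωB])
  -- union bounds
  have hsub_lower : ∀ n : ℕ,
      (⋃ A ∈ (Finset.range n).powersetCard (n/2), C A n) ⊆
        {ω | ∑ k ∈ Finset.range n, X k ω ≤ 0} := by
    intro n ω hω
    simp only [Set.mem_iUnion] at hω
    obtain ⟨A, hA, hωA⟩ := hω
    rw [Finset.mem_powersetCard] at hA
    have := hfilter n A ω hA.1 hωA
    simp only [Set.mem_setOf_eq, hsum n ω, this, hA.2]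
    omega
  have hsub_upper : ∀ n : ℕ, {ω | ∑ k ∈ Finset.range n, X k ω ≤ 0} ⊆
      ⋃ A ∈ (Finset.range n).powerset.filter (fun A => 2 * A.card ≤ n), C A n := by
    intro n ω hω
    simp only [Set.mem_setOf_eq, hsum n ω] at hω
    set A := (Finset.range n).filter (fun i => X i ω = 1) with hA
    have hcard : 2 * A.card ≤ n := by omega
    simp only [Set.mem_iUnion]
    refine ⟨A, ?_, ?_⟩
    · simp only [Finset.mem_filter, Finset.mem_powerset]
      exact ⟨Finset.filter_subset _ _, hcard⟩
    · rw [hmemC]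
      intro i hi
      by_cases h : i ∈ A
      · rw [if_pos h]; exact (Finset.mem_filter.mp h).2
      · rw [if_neg h]
        rcases hval i ω with h1 | h1
        · exact absurd (Finset.mem_filter.mpr ⟨hi, h1⟩) h
        · exact h1
  -- stage 3: measure bounds
  set E : ℕ → Set Ω := fun n => {ω | ∑ k ∈ Finset.range n, X k ω ≤ 0} with hE
  set M : ℕ → ℝ := fun n => p ^ (n/2) * (1-p) ^ (n - n/2) with hMdef
  have hCval : ∀ (n : ℕ) (A : Finset ℕ), A ⊆ Finset.range n →
      μ (C A n) = ENNReal.ofReal (p ^ A.card * (1-p) ^ (n - A.card)) := by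
    intro n A hA
    rw [hatom n A hA, ← ENNReal.ofReal_pow hp0.le, ← ENNReal.ofReal_pow hq0.le,
      ← ENNReal.ofReal_mul (by positivity)]
  have hterm2 : ∀ (n k : ℕ), 2 * k ≤ n → p ^ k * (1-p) ^ (n-k) ≤ M n := by
    intro n k hk
    have hk2 : k ≤ n/2 := by omega
    have h1 : n - k = (n/2 - k) + (n - n/2) := by omega
    rw [hMdef]
    calc p^k*(1-p)^(n-k) = p^k * ((1-p)^(n/2-k) * (1-p)^(n-n/2)) := by rw [h1, pow_add]
      _ ≤ p^k * (p^(n/2-k) * (1-p)^(n-n/2)) := by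
          refine mul_le_mul_of_nonneg_left (mul_le_mul_of_nonneg_right ?_ (by positivity))
            (by positivity)
          exact pow_le_pow_left₀ hq0.le (by linarith) _
      _ = p^(n/2)*(1-p)^(n-n/2) := by
          rw [← mul_assoc, ← pow_add]
          congr 2
          omega
  have hM0 : ∀ n, 0 < M n := fun n => by rw [hMdef]; positivity
  -- upper bound
  have hu : ∀ n : ℕ, (μ (E n)).toReal ≤ (2:ℝ)^n * M n := by
    intro n
    set T : Finset (Finset ℕ) :=
      (Finset.range n).powerset.filter (fun A => 2 * A.card ≤ n) with hT
    have h1 : μ (E n) ≤ ((2^n : ℕ) : ENNReal) * ENNReal.ofReal (M n) := by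
      calc μ (E n) ≤ μ (⋃ A ∈ T, C A n) := measure_mono (hsub_upper n)
        _ ≤ ∑ A ∈ T, μ (C A n) := measure_biUnion_finset_le _ _
        _ ≤ ∑ _A ∈ T, ENNReal.ofReal (M n) := by
            refine Finset.sum_le_sum fun A hA => ?_
            have hA' := Finset.mem_filter.mp hA
            rw [hCval n A (Finset.mem_powerset.mp hA'.1)]
            exact ENNReal.ofReal_le_ofReal (hterm2 n A.card hA'.2)
        _ = (T.card : ENNReal) * ENNReal.ofReal (M n) := by
            rw [Finset.sum_const, nsmul_eq_mul]
        _ ≤ ((2^n : ℕ) : ENNReal) * ENNReal.ofReal (M n) := by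
            refine mul_le_mul_left ?_ _
            refine Nat.cast_le.mpr ?_
            calc T.card ≤ (Finset.range n).powerset.card := Finset.card_filter_le _ _
              _ = 2^n := by rw [Finset.card_powerset, Finset.card_range]
    have h2 : μ (E n) ≤ ENNReal.ofReal ((2:ℝ)^n * M n) := by
      rw [ENNReal.ofReal_mul (by positivity),
        show ENNReal.ofReal ((2:ℝ)^n) = ((2^n : ℕ) : ENNReal) by
          rw [show ((2:ℝ)^n) = ((2^n : ℕ) : ℝ) by push_cast; ring, ENNReal.ofReal_natCast]]
      exact h1
    exact ENNReal.toReal_le_of_le_ofReal (by positivity) h2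
  -- lower bound
  have hl : ∀ n : ℕ, (2:ℝ)^n / ((n:ℝ)+1) * M n ≤ (μ (E n)).toReal := by
    intro n
    set Tl : Finset (Finset ℕ) := (Finset.range n).powersetCard (n/2) with hTl
    have h1 : ((n.choose (n/2) : ℕ) : ENNReal) * ENNReal.ofReal (M n) ≤ μ (E n) := by
      have hsumeq : μ (⋃ A ∈ Tl, C A n) = ∑ A ∈ Tl, μ (C A n) :=
        measure_biUnion_finset (hdisj n) (fun A _ => hCmeas A n)
      have hconst : ∀ A ∈ Tl, μ (C A n) = ENNReal.ofReal (M n) := by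
        intro A hA
        rw [Finset.mem_powersetCard] at hA
        rw [hCval n A hA.1, hA.2, hMdef]
      calc ((n.choose (n/2) : ℕ) : ENNReal) * ENNReal.ofReal (M n)
          = ∑ _A ∈ Tl, ENNReal.ofReal (M n) := by
            rw [Finset.sum_const, nsmul_eq_mul, hTl, Finset.card_powersetCard,
              Finset.card_range]
        _ = ∑ A ∈ Tl, μ (C A n) := (Finset.sum_congr rfl hconst).symm
        _ = μ (⋃ A ∈ Tl, C A n) := hsumeq.symm
        _ ≤ μ (E n) := measure_mono (hsub_lower n)
    have h2 : ENNReal.ofReal ((n.choose (n/2) : ℝ) * M n) ≤ μ (E n) := by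
      rw [ENNReal.ofReal_mul (by positivity), ENNReal.ofReal_natCast]
      exact h1
    have h3 := ENNReal.toReal_mono (measure_ne_top μ _) h2
    rw [ENNReal.toReal_ofReal (by positivity)] at h3
    refine le_trans ?_ h3
    have hch : (2:ℝ)^n ≤ ((n:ℝ)+1) * (n.choose (n/2) : ℝ) := by
      have hnat : 2^n ≤ (n+1) * n.choose (n/2) := by
        calc 2^n = ∑ i ∈ Finset.range (n+1), n.choose i := (Nat.sum_range_choose n).symm
          _ ≤ (Finset.range (n+1)).card • n.choose (n/2) :=
              Finset.sum_le_card_nsmul _ _ _ (fun i _ => Nat.choose_le_middle i n)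
          _ = (n+1) * n.choose (n/2) := by rw [Finset.card_range, smul_eq_mul]
      have := (Nat.cast_le (α := ℝ)).mpr hnat
      push_cast at this
      linarith
    have hn1 : (0:ℝ) < (n:ℝ)+1 := by positivity
    rw [div_mul_eq_mul_div, div_le_iff₀ hn1]
    calc (2:ℝ)^n * M n ≤ (((n:ℝ)+1) * (n.choose (n/2) : ℝ)) * M n :=
          mul_le_mul_of_nonneg_right hch (hM0 n).le
      _ = (n.choose (n/2) : ℝ) * M n * ((n:ℝ)+1) := by ring
  exact auxTendsto p hp hp1 (fun n => (μ (E n)).toReal) M (fun n => rfl) hl hu
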